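/- Let Q be a finite (left) quasifield with q elements, let d ≥ 1 be an integer, and let γ ∈ Q. Let N be the q^{d+1} × q^{d+1} 0-1 matrix over ℝ, indexed by Q^{d+1} × Q^{d+1}, whose (x,y)-entry is 1 exactly when x is adjacent to y in DP_Q(d,γ), let M be the block matrix [[0, N],[Nᵀ, 0]], let J be the q^{d+1} × q^{d+1} all-ones matrix, and let P = [[0, J],[J, 0]]. Then M³ = q^d·M + q^{d−1}·(q^d − 1)·P. -/

import Mathlib

open Matrix

/-- A finite (left) quasifield. -/
class Quasifield (Q : Type*) extends AddCommGroup Q, Mul Q, One Q where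
  one_ne_zero : (1 : Q) ≠ 0
  one_mul : ∀ a : Q, 1 * a = a
  mul_one : ∀ a : Q, a * 1 = a
  zero_mul : ∀ a : Q, 0 * a = 0
  mul_zero : ∀ a : Q, a * 0 = 0
  mul_ne_zero : ∀ a b : Q, a ≠ 0 → b ≠ 0 → a * b ≠ 0
  existsUnique_mul_left : ∀ a b : Q, a ≠ 0 → b ≠ 0 → ∃! x : Q, a * x = b
  existsUnique_mul_right : ∀ a b : Q, a ≠ 0 → b ≠ 0 → ∃! y : Q, y * a = b
  left_distrib : ∀ a b c : Q, a * (b + c) = a * b + a * c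
  existsUnique_affine : ∀ a b c : Q, a ≠ b → ∃! x : Q, a * x = b * x + c

/-- The kernel of a quasifield. -/
def Quasifield.kernel (Q : Type*) [Quasifield Q] : Set Q :=
  {k | (∀ x y : Q, (x + y) * k = x * k + y * k) ∧ ∀ x y : Q, (x * y) * k = x * (y * k)}

/-- The adjacency relation of the product graph `DP_Q(d,γ)`:
`x ∈ X = Q^{d+1}` is adjacent to `y ∈ Y = Q^{d+1}` iff
`x_{d+1} + γ = x₁·y₁ + ⋯ + x_d·y_d + y_{d+1}`. -/
def DPAdj {Q : Type*} [Quasifield Q] (d : ℕ) (γ : Q) (x y : Fin (d + 1) → Q) : Prop :=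
  x (Fin.last d) + γ = (∑ i : Fin d, x i.castSucc * y i.castSucc) + y (Fin.last d)

open scoped Classical in
/-- The `X × Y` block `N` of the adjacency matrix of `DP_Q(d,γ)`. -/
noncomputable def DPBlock (Q : Type*) [Quasifield Q] [Fintype Q] (d : ℕ) (γ : Q) :
    Matrix (Fin (d + 1) → Q) (Fin (d + 1) → Q) ℝ :=
  Matrix.of fun x y => if DPAdj d γ x y then 1 else 0


section
open Finset
variable {Q : Type*} [Quasifield Q] [Fintype Q] [DecidableEq Q]

lemma qf_mulRight_bij (b : Q) (hb : b ≠ 0) : Function.Bijective (fun a : Q => a * b) := by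
  rw [Fintype.bijective_iff_injective_and_card]
  refine ⟨fun a a' h => ?_, rfl⟩
  simp only at h
  by_cases ha : a = 0
  · subst ha
    rw [Quasifield.zero_mul] at h
    by_contra ha'
    exact Quasifield.mul_ne_zero a' b (Ne.symm ha') hb h.symm
  · have hab : a * b ≠ 0 := Quasifield.mul_ne_zero a b ha hb
    obtain ⟨y, hy, hu⟩ := Quasifield.existsUnique_mul_right b (a * b) hb hab
    exact (hu a rfl).trans (hu a' h.symm).symm

lemma qf_existsUnique_mulRight (b t : Q) (hb : b ≠ 0) : ∃! a : Q, a * b = t := by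
  obtain ⟨a, ha⟩ := (qf_mulRight_bij b hb).surjective t
  exact ⟨a, ha, fun a' ha' => (qf_mulRight_bij b hb).injective (ha'.trans ha.symm)⟩

lemma sum_ite_unique {α : Type*} [Fintype α] [DecidableEq α]
    (p : α → Prop) [DecidablePred p] (h : ∃! a, p a) :
    ∑ a : α, (if p a then (1:ℝ) else 0) = 1 := by
  obtain ⟨a₀, ha₀, hu⟩ := h
  have he : ∀ a, p a ↔ a = a₀ := fun a => ⟨fun h => hu a h, fun h => h ▸ ha₀⟩
  simp [he]

lemma count_zero (n : ℕ) (b : Fin n → Q) (c : Q) (hb : ∀ i, b i = 0) :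
    ∑ f : Fin n → Q, (if ∑ i, f i * b i = c then (1:ℝ) else 0) =
      if c = 0 then (Fintype.card Q : ℝ) ^ n else 0 := by
  have h0 : ∀ f : Fin n → Q, (∑ i, f i * b i) = 0 := by
    intro f; simp [hb, Quasifield.mul_zero]
  simp only [h0]
  by_cases hc : c = 0 <;> simp [hc, eq_comm, Fintype.card_fun]

lemma count_affine (n : ℕ) (b : Fin n → Q) (c : Q) (j : Fin n) (hj : b j ≠ 0) :
    ∑ f : Fin n → Q, (if ∑ i, f i * b i = c then (1:ℝ) else 0) =
      (Fintype.card Q : ℝ) ^ (n - 1) := by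
  classical
  set e := Equiv.funSplitAt j Q with he
  rw [← Equiv.sum_comp e.symm
    (fun f : Fin n → Q => if ∑ i, f i * b i = c then (1:ℝ) else 0)]
  rw [Fintype.sum_prod_type, Finset.sum_comm]
  have key : ∀ g : {i : Fin n // i ≠ j} → Q,
      ∑ a : Q, (if ∑ i, (e.symm (a, g)) i * b i = c then (1:ℝ) else 0) = 1 := by
    intro g
    have hmem : ∀ (a : Q) (i : Fin n) (hi : i ≠ j),
        (e.symm (a, g)) i = g ⟨i, hi⟩ := by
      intro a i hi
      simp only [he, Equiv.funSplitAt_symm_apply, dif_neg hi]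
    have hsplit : ∀ a : Q, (∑ i, (e.symm (a, g)) i * b i) =
        a * b j + ∑ i ∈ (univ : Finset (Fin n)).erase j, (e.symm ((0:Q), g)) i * b i := by
      intro a
      rw [← Finset.add_sum_erase _ _ (Finset.mem_univ j)]
      congr 1
      · simp [he]
      · exact Finset.sum_congr rfl fun i hi => by
          rw [hmem a i (Finset.mem_erase.1 hi).1, hmem 0 i (Finset.mem_erase.1 hi).1]
    simp only [hsplit]
    apply sum_ite_unique
    have := qf_existsUnique_mulRight (b j)
      (c - ∑ i ∈ (univ : Finset (Fin n)).erase j, (e.symm ((0:Q), g)) i * b i) hj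
    obtain ⟨a, ha, hu⟩ := this
    refine ⟨a, ?_, fun a' ha' => hu a' ?_⟩
    · show a * b j + _ = c
      rw [ha]; abel
    · show a' * b j = c - _
      rw [eq_sub_iff_add_eq]; exact ha'
  calc ∑ g : {i : Fin n // i ≠ j} → Q, ∑ a : Q,
        (if ∑ i, (e.symm (a, g)) i * b i = c then (1:ℝ) else 0)
      = ∑ _g : {i : Fin n // i ≠ j} → Q, (1:ℝ) := Finset.sum_congr rfl fun g _ => key g
    _ = (Fintype.card Q : ℝ) ^ (n - 1) := by
        rw [Finset.sum_const, Finset.card_univ, Fintype.card_fun]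
        have : Fintype.card {i : Fin n // i ≠ j} = n - 1 := by
          simp [Fintype.card_subtype_compl]
        simp [this]

end

section
open Finset
variable {Q : Type*} [Quasifield Q] [Fintype Q] [DecidableEq Q]

noncomputable def Jmat (Q : Type*) [Quasifield Q] [Fintype Q] (d : ℕ) :
    Matrix (Fin (d + 1) → Q) (Fin (d + 1) → Q) ℝ := Matrix.of fun _ _ => 1

open scoped Classical in
noncomputable def Smat (Q : Type*) [Quasifield Q] [Fintype Q] (d : ℕ) :
    Matrix (Fin (d + 1) → Q) (Fin (d + 1) → Q) ℝ :=
  Matrix.of fun y y' => if ∀ i : Fin d, y i.castSucc = y' i.castSucc then 1 else 0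

lemma qf_mul_sub (a b c : Q) : a * (b - c) = a * b - a * c := by
  have h := Quasifield.left_distrib a (b - c) c
  rw [sub_add_cancel] at h
  rw [eq_sub_iff_add_eq, ← h]

lemma qf_NtN (d : ℕ) (γ : Q) : (DPBlock Q d γ)ᵀ * DPBlock Q d γ =
    ((Fintype.card Q : ℝ) ^ d) • (1 : Matrix (Fin (d+1) → Q) (Fin (d+1) → Q) ℝ) +
    ((Fintype.card Q : ℝ) ^ (d-1)) • (Jmat Q d - Smat Q d) := by
  classical
  ext y y'
  rw [Matrix.mul_apply]
  simp only [transpose_apply, DPBlock, of_apply, ite_mul, mul_ite, one_mul, mul_one,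
    zero_mul, mul_zero, ← ite_and]
  rw [← Equiv.sum_comp (Fin.snocEquiv fun _ : Fin (d+1) => Q)
    (fun x => if DPAdj d γ x y' ∧ DPAdj d γ x y then (1:ℝ) else 0)]
  rw [Fintype.sum_prod_type, Finset.sum_comm]
  simp only [DPAdj, Fin.snocEquiv_apply, Fin.snoc_last, Fin.snoc_castSucc]
  set t₁ : (Fin d → Q) → Q := fun f => (∑ i, f i * y i.castSucc) + y (Fin.last d) with ht₁
  set t₂ : (Fin d → Q) → Q := fun f => (∑ i, f i * y' i.castSucc) + y' (Fin.last d) with ht₂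
  have hcond : ∀ (a : Q) (f : Fin d → Q),
      ((a + γ = t₂ f) ∧ (a + γ = t₁ f)) ↔ (a = t₂ f - γ ∧ t₁ f = t₂ f) := by
    intro a f
    constructor
    · rintro ⟨h1, h2⟩
      exact ⟨by rw [← h1]; abel, h2.symm.trans h1⟩
    · rintro ⟨h1, h2⟩
      have h3 : a + γ = t₂ f := by rw [h1]; abel
      exact ⟨h3, h2 ▸ h3⟩
  simp only [show ∀ (a : Q) (f : Fin d → Q), ((a + γ = ∑ i, f i * y' i.castSucc + y' (Fin.last d)) ∧
      (a + γ = ∑ i, f i * y i.castSucc + y (Fin.last d))) ↔ (a = t₂ f - γ ∧ t₁ f = t₂ f) from hcond]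
  have hinner : ∀ f : Fin d → Q,
      (∑ a : Q, if a = t₂ f - γ ∧ t₁ f = t₂ f then (1:ℝ) else 0)
        = if t₁ f = t₂ f then 1 else 0 := by
    intro f
    by_cases hD : t₁ f = t₂ f <;> simp [hD]
  simp only [hinner]
  have hiff : ∀ f : Fin d → Q, (t₁ f = t₂ f) ↔
      (∑ i, f i * (y i.castSucc - y' i.castSucc) = y' (Fin.last d) - y (Fin.last d)) := by
    intro f
    have hl : (∑ i, f i * (y i.castSucc - y' i.castSucc))
        = (∑ i, f i * y i.castSucc) - ∑ i, f i * y' i.castSucc := by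
      rw [← Finset.sum_sub_distrib]
      exact Finset.sum_congr rfl fun i _ => qf_mul_sub _ _ _
    show ((∑ i, f i * y i.castSucc) + y (Fin.last d)
        = (∑ i, f i * y' i.castSucc) + y' (Fin.last d)) ↔ _
    rw [hl]
    constructor
    · intro h
      exact sub_eq_sub_iff_add_eq_add.2 (h.trans (add_comm _ _))
    · intro h
      exact (sub_eq_sub_iff_add_eq_add.1 h).trans (add_comm _ _)
  simp only [hiff]
  by_cases hb : ∀ i : Fin d, y i.castSucc - y' i.castSucc = 0
  · rw [count_zero d _ _ hb]
    have hcs : ∀ i : Fin d, y i.castSucc = y' i.castSucc :=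
      fun i => sub_eq_zero.1 (hb i)
    by_cases hc : y' (Fin.last d) - y (Fin.last d) = 0
    · have hyy : y = y' := by
        funext j
        refine Fin.lastCases ?_ ?_ j
        · exact (sub_eq_zero.1 hc).symm
        · exact fun i => hcs i
      simp [hyy, Matrix.add_apply, Matrix.smul_apply, Matrix.one_apply, Jmat, Smat,
        Matrix.sub_apply, hc]
    · have hyy : y ≠ y' := fun h => hc (by rw [h]; abel)
      simp [Matrix.add_apply, Matrix.smul_apply, Matrix.one_apply, Jmat, Smat,
        Matrix.sub_apply, hyy, hc, hcs]
  · push_neg at hb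
    obtain ⟨j, hj⟩ := hb
    rw [count_affine d _ _ j hj]
    have hne : ¬ (∀ i : Fin d, y i.castSucc = y' i.castSucc) :=
      fun h => hj (sub_eq_zero.2 (h j))
    have hyy : y ≠ y' := fun h => hj (by rw [h]; abel)
    simp [Matrix.add_apply, Matrix.smul_apply, Matrix.one_apply, Jmat, Smat,
      Matrix.sub_apply, hyy, hne]

end

section
variable {Q : Type*} [Quasifield Q] [Fintype Q] [DecidableEq Q]

lemma qf_NJ (d : ℕ) (γ : Q) : DPBlock Q d γ * Jmat Q d =
    ((Fintype.card Q : ℝ) ^ d) • Jmat Q d := by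
  classical
  ext x y
  rw [Matrix.mul_apply]
  simp only [DPBlock, Jmat, of_apply, mul_one]
  rw [← Equiv.sum_comp (Fin.snocEquiv fun _ : Fin (d+1) => Q)
    (fun y' => if DPAdj d γ x y' then (1:ℝ) else 0)]
  rw [Fintype.sum_prod_type, Finset.sum_comm]
  simp only [DPAdj, Fin.snocEquiv_apply, Fin.snoc_last, Fin.snoc_castSucc]
  have hinner : ∀ f : Fin d → Q,
      (∑ a : Q, if x (Fin.last d) + γ = (∑ i, x i.castSucc * f i) + a then (1:ℝ) else 0)
        = 1 := by
    intro f
    have h : ∀ a : Q, (x (Fin.last d) + γ = (∑ i, x i.castSucc * f i) + a)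
        ↔ a = x (Fin.last d) + γ - (∑ i, x i.castSucc * f i) := by
      intro a
      constructor
      · intro h; rw [h]; abel
      · intro h; rw [h]; abel
    simp [h]
  simp only [hinner]
  simp [Matrix.smul_apply, Fintype.card_fun]

lemma qf_NS (d : ℕ) (γ : Q) : DPBlock Q d γ * Smat Q d = Jmat Q d := by
  classical
  ext x y
  rw [Matrix.mul_apply]
  simp only [DPBlock, Smat, Jmat, of_apply, ite_mul, mul_ite, one_mul, mul_one,
    zero_mul, mul_zero, ← ite_and]
  rw [← Equiv.sum_comp (Fin.snocEquiv fun _ : Fin (d+1) => Q)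
    (fun y' => if ((∀ i : Fin d, y' i.castSucc = y i.castSucc) ∧ DPAdj d γ x y')
      then (1:ℝ) else 0)]
  rw [Fintype.sum_prod_type, Finset.sum_comm]
  simp only [DPAdj, Fin.snocEquiv_apply, Fin.snoc_last, Fin.snoc_castSucc]
  have hinner : ∀ f : Fin d → Q,
      (∑ a : Q, if ((∀ i : Fin d, f i = y i.castSucc) ∧
          x (Fin.last d) + γ = (∑ i, x i.castSucc * f i) + a) then (1:ℝ) else 0)
        = if f = (fun i => y i.castSucc) then 1 else 0 := by
    intro f
    by_cases hf : ∀ i : Fin d, f i = y i.castSucc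
    · have hf' : f = fun i => y i.castSucc := funext hf
      subst hf'
      have h : ∀ a : Q, (x (Fin.last d) + γ = (∑ i : Fin d, x i.castSucc * y i.castSucc) + a)
          ↔ a = x (Fin.last d) + γ - (∑ i : Fin d, x i.castSucc * y i.castSucc) := by
        intro a
        constructor
        · intro h; rw [h]; abel
        · intro h; rw [h]; abel
      simp [hf, h]
    · have hf' : f ≠ fun i => y i.castSucc := fun h => hf (fun i => congrFun h i)
      simp [hf, hf']
  simp only [hinner]
  simp

lemma qf_key (d : ℕ) (γ : Q) :
    DPBlock Q d γ * (DPBlock Q d γ)ᵀ * DPBlock Q d γ =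
      ((Fintype.card Q : ℝ) ^ d) • DPBlock Q d γ +
      ((Fintype.card Q : ℝ) ^ (d-1) * ((Fintype.card Q : ℝ) ^ d - 1)) • Jmat Q d := by
  rw [Matrix.mul_assoc, qf_NtN, Matrix.mul_add, Matrix.mul_smul, Matrix.mul_one,
    Matrix.mul_smul, Matrix.mul_sub, qf_NJ, qf_NS, smul_sub, smul_smul, ← sub_smul]
  congr 1
  ring

lemma qf_key' (d : ℕ) (γ : Q) :
    (DPBlock Q d γ)ᵀ * DPBlock Q d γ * (DPBlock Q d γ)ᵀ =
      ((Fintype.card Q : ℝ) ^ d) • (DPBlock Q d γ)ᵀ +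
      ((Fintype.card Q : ℝ) ^ (d-1) * ((Fintype.card Q : ℝ) ^ d - 1)) • Jmat Q d := by
  have h := congrArg Matrix.transpose (qf_key (Q := Q) d γ)
  simp only [Matrix.transpose_mul, Matrix.transpose_add, Matrix.transpose_smul,
    Matrix.transpose_transpose] at h
  have hJ : (Jmat Q d)ᵀ = Jmat Q d := rfl
  rw [hJ] at h
  rw [Matrix.mul_assoc]
  exact h


end

/-- Lemma 4.2, key identity: if `M = [[0,N],[Nᵀ,0]]` is the adjacency matrix of
`DP_Q(d,γ)` and `P = [[0,J],[J,0]]` with `J` the all-ones matrix, then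
`M³ = q^d·M + q^{d-1}·(q^d - 1)·P`. -/
theorem stmt_17 {Q : Type*} [Quasifield Q] [Fintype Q] [DecidableEq Q] (d : ℕ) (hd : 1 ≤ d) (γ : Q) :
    (Matrix.fromBlocks 0 (DPBlock Q d γ) (DPBlock Q d γ)ᵀ 0) ^ 3 =
      (Fintype.card Q : ℝ) ^ d •
        Matrix.fromBlocks 0 (DPBlock Q d γ) (DPBlock Q d γ)ᵀ 0 +
      ((Fintype.card Q : ℝ) ^ (d - 1) * ((Fintype.card Q : ℝ) ^ d - 1)) •
        Matrix.fromBlocks 0 (Matrix.of fun _ _ => (1 : ℝ)) (Matrix.of fun _ _ => (1 : ℝ)) 0 := by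
  have h1 := qf_key (Q := Q) d γ
  have h2 := qf_key' (Q := Q) d γ
  have hJ : (Matrix.of fun _ _ => (1 : ℝ) :
      Matrix (Fin (d+1) → Q) (Fin (d+1) → Q) ℝ) = Jmat Q d := rfl
  rw [pow_succ, pow_succ, pow_one, Matrix.fromBlocks_multiply, Matrix.fromBlocks_multiply, hJ]
  simp only [Matrix.zero_mul, Matrix.mul_zero, add_zero, zero_add]
  rw [Matrix.fromBlocks_smul, Matrix.fromBlocks_smul, Matrix.fromBlocks_add]
  simp only [smul_zero, add_zero]
  rw [h1, h2]
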